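/- arXiv:1406.0449 — 2 statements merged into one kernel-verified Lean document; each statement's English description precedes it below -/
import Mathlib

section
/- Consider the WARM star graph with two edges (n = 2). Then: (a) for 1 < α ≤ 3, the unique equilibrium is (1/2, 1/2); it is linearly stable if α < 3 and critical if α = 3. (b) For α > 3, the equilibria are exactly (1/2, 1/2), (v, 1−v) and (1−v, v) for a unique v = v(α) ∈ (1/2, 2/3); the equilibria (v, 1−v) and (1−v, v) are linearly stable while (1/2, 1/2) is linearly unstable. Moreover v(α) is strictly increasing on (3, ∞), with v(α) → 1/2 as α ↓ 3 and v(α) → 2/3 as α → ∞. -/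
open Finset

noncomputable section

/-- Membership in the simplex `Δ`. -/
def InSimplex {ι : Type*} [Fintype ι] (v : ι → ℝ) : Prop :=
  (∀ i, 0 ≤ v i) ∧ ∑ i, v i = 1

/-- A WARM weight: a probability distribution on the subsets of the colour set,
giving no mass to the empty set. -/
def IsWarmWeight {ι : Type*} [Fintype ι] [DecidableEq ι] (p : Finset ι → ℝ) : Prop :=
  p ∅ = 0 ∧ (∀ A, 0 ≤ p A ∧ p A ≤ 1) ∧ ∑ A : Finset ι, p A = 1

/-- The WARM vector field `F`. -/
def warmF {ι : Type*} [Fintype ι] [DecidableEq ι] (α : ℝ) (p : Finset ι → ℝ)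
    (v : ι → ℝ) (i : ι) : ℝ :=
  -v i + ∑ A ∈ Finset.univ.filter (fun A : Finset ι => i ∈ A),
      p A * v i ^ α / (∑ j ∈ A, v j ^ α)

/-- The Jacobian matrix `D(v)`. -/
def warmD {ι : Type*} [Fintype ι] [DecidableEq ι] (α : ℝ) (p : Finset ι → ℝ)
    (v : ι → ℝ) : Matrix ι ι ℝ :=
  Matrix.of fun i k =>
    if i = k then
      -1 + α * v i ^ (α - 1) *
        ∑ A ∈ Finset.univ.filter (fun A : Finset ι => i ∈ A),
          p A * ((∑ j ∈ A, v j ^ α) - v i ^ α) / (∑ j ∈ A, v j ^ α) ^ 2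
    else
      -(α * v k ^ (α - 1) * v i ^ α *
        ∑ A ∈ Finset.univ.filter (fun A : Finset ι => i ∈ A ∧ k ∈ A),
          p A / (∑ j ∈ A, v j ^ α) ^ 2)

/-- `μ ∈ ℂ` is an eigenvalue of the real matrix `M`, i.e. a root of its
characteristic polynomial. -/
def IsEigenvalue {ι : Type*} [Fintype ι] [DecidableEq ι] (M : Matrix ι ι ℝ) (μ : ℂ) : Prop :=
  (M.charpoly.map (algebraMap ℝ ℂ)).IsRoot μ

/-- Linear stability: every complex eigenvalue has negative real part. -/
def LinStable {ι : Type*} [Fintype ι] [DecidableEq ι] (M : Matrix ι ι ℝ) : Prop :=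
  ∀ μ : ℂ, IsEigenvalue M μ → μ.re < 0

/-- Linear instability: some eigenvalue has positive real part. -/
def LinUnstable {ι : Type*} [Fintype ι] [DecidableEq ι] (M : Matrix ι ι ℝ) : Prop :=
  ∃ μ : ℂ, IsEigenvalue M μ ∧ 0 < μ.re

/-- Critical: neither linearly stable nor linearly unstable. -/
def CriticalPt {ι : Type*} [Fintype ι] [DecidableEq ι] (M : Matrix ι ι ℝ) : Prop :=
  ¬ LinStable M ∧ ¬ LinUnstable M


/-- The WARM star graph weight on two edges: each nonempty subset of `[2]` gets mass
`1/3`. -/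
def p2 : Finset (Fin 2) → ℝ := fun A => if A = ∅ then 0 else 1 / 3


/-- `G u = log(2e^u - 1) - log(2 - e^u)`. -/
def Gfun (u : ℝ) : ℝ := Real.log (2 * Real.exp u - 1) - Real.log (2 - Real.exp u)

def Gder (u : ℝ) : ℝ := 3 * Real.exp u / ((2 * Real.exp u - 1) * (2 - Real.exp u))

lemma Gfun_hasDeriv {u : ℝ} (h1 : 1 ≤ Real.exp u) (h2 : Real.exp u < 2) :
    HasDerivAt Gfun (Gder u) u := by
  have e1 : (0:ℝ) < 2 * Real.exp u - 1 := by linarith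
  have e2 : (0:ℝ) < 2 - Real.exp u := by linarith
  have d1 : HasDerivAt (fun u => Real.log (2 * Real.exp u - 1))
      ((2 * Real.exp u) / (2 * Real.exp u - 1)) u := by
    have : HasDerivAt (fun u => 2 * Real.exp u - 1) (2 * Real.exp u) u :=
      ((Real.hasDerivAt_exp u).const_mul 2).sub_const 1
    simpa using this.log (ne_of_gt e1)
  have d2 : HasDerivAt (fun u => Real.log (2 - Real.exp u))
      ((-Real.exp u) / (2 - Real.exp u)) u := by
    have : HasDerivAt (fun u => 2 - Real.exp u) (-Real.exp u) u :=
      (Real.hasDerivAt_exp u).const_sub 2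
    simpa using this.log (ne_of_gt e2)
  have := d1.sub d2
  refine HasDerivAt.congr_deriv this ?_
  unfold Gder
  field_simp
  ring

lemma Gder_lt {u₁ u₂ : ℝ} (h0 : 0 ≤ u₁) (h12 : u₁ < u₂) (h2 : Real.exp u₂ < 2) :
    Gder u₁ < Gder u₂ := by
  set t₁ := Real.exp u₁
  set t₂ := Real.exp u₂
  have ht1 : 1 ≤ t₁ := Real.one_le_exp h0
  have ht12 : t₁ < t₂ := Real.exp_lt_exp.2 h12
  have e1 : (0:ℝ) < 2 * t₁ - 1 := by linarith
  have e2 : (0:ℝ) < 2 - t₁ := by linarith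
  have e3 : (0:ℝ) < 2 * t₂ - 1 := by linarith
  have e4 : (0:ℝ) < 2 - t₂ := by linarith
  unfold Gder
  rw [div_lt_div_iff₀ (by positivity) (by positivity)]
  nlinarith [mul_pos (sub_pos.2 ht12) (by nlinarith : (0:ℝ) < t₁ * t₂ - 1)]

lemma Gfun_zero : Gfun 0 = 0 := by simp [Gfun]

lemma Gder_zero : Gder 0 = 3 := by simp [Gder]; norm_num

lemma Gfun_contOn {b : ℝ} (hb : Real.exp b < 2) :
    ContinuousOn Gfun (Set.Icc 0 b) := by
  intro x hx
  have h1 : 1 ≤ Real.exp x := Real.one_le_exp hx.1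
  have h2 : Real.exp x < 2 := lt_of_le_of_lt (Real.exp_le_exp.2 hx.2) hb
  exact (Gfun_hasDeriv h1 h2).continuousAt.continuousWithinAt

/-- Mean value theorem on `[a,b] ⊆ [0, log 2)`. -/
lemma Gfun_mvt {a b : ℝ} (h0 : 0 ≤ a) (hab : a < b) (hb : Real.exp b < 2) :
    ∃ c, a < c ∧ c < b ∧ Gfun b - Gfun a = (b - a) * Gder c := by
  have hcont : ContinuousOn Gfun (Set.Icc a b) := by
    intro x hx
    have h1 : 1 ≤ Real.exp x := Real.one_le_exp (le_trans h0 hx.1)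
    have h2 : Real.exp x < 2 := lt_of_le_of_lt (Real.exp_le_exp.2 hx.2) hb
    exact (Gfun_hasDeriv h1 h2).continuousAt.continuousWithinAt
  have hderiv : ∀ x ∈ Set.Ioo a b, HasDerivAt Gfun (Gder x) x := by
    intro x hx
    exact Gfun_hasDeriv (Real.one_le_exp (le_trans h0 hx.1.le))
      (lt_of_le_of_lt (Real.exp_le_exp.2 hx.2.le) hb)
  obtain ⟨c, hc, hc'⟩ := exists_hasDerivAt_eq_slope Gfun Gder hab hcont hderiv
  refine ⟨c, hc.1, hc.2, ?_⟩
  have hba : b - a ≠ 0 := by linarith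
  field_simp at hc'
  linarith [hc']

lemma Gfun_gt_three_mul {u : ℝ} (hu : 0 < u) (h2 : Real.exp u < 2) :
    3 * u < Gfun u := by
  obtain ⟨c, hc0, hcu, heq⟩ := Gfun_mvt le_rfl hu h2
  rw [Gfun_zero] at heq
  have : Gder 0 < Gder c := Gder_lt le_rfl hc0 (lt_of_le_of_lt (Real.exp_le_exp.2 hcu.le) h2)
  rw [Gder_zero] at this
  nlinarith

lemma Gfun_lt_mul_Gder {u : ℝ} (hu : 0 < u) (h2 : Real.exp u < 2) :
    Gfun u < u * Gder u := by
  obtain ⟨c, hc0, hcu, heq⟩ := Gfun_mvt le_rfl hu h2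
  rw [Gfun_zero] at heq
  have : Gder c < Gder u := Gder_lt hc0.le hcu h2
  nlinarith

lemma Gfun_slope_lt {u₁ u₂ : ℝ} (h1 : 0 < u₁) (h12 : u₁ < u₂) (h2 : Real.exp u₂ < 2) :
    Gfun u₁ / u₁ < Gfun u₂ / u₂ := by
  obtain ⟨c₁, hc10, hc1u, heq1⟩ := Gfun_mvt le_rfl h1 (lt_of_le_of_lt (Real.exp_le_exp.2 h12.le) h2)
  obtain ⟨c₂, hc21, hc2u, heq2⟩ := Gfun_mvt h1.le h12 h2
  rw [Gfun_zero] at heq1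
  have hcc : Gder c₁ < Gder c₂ := Gder_lt hc10.le (lt_trans hc1u hc21)
    (lt_of_le_of_lt (Real.exp_le_exp.2 hc2u.le) h2)
  rw [div_lt_div_iff₀ h1 (lt_trans h1 h12)]
  nlinarith [mul_lt_mul_of_pos_left hcc (mul_pos h1 (sub_pos.2 h12))]

/-- `Q α u`: `u` parametrizes a nontrivial equilibrium for `α`. -/
def Qprop (α u : ℝ) : Prop := 0 < u ∧ Real.exp u < 2 ∧ Gfun u = α * u

lemma Q_unique {α u u' : ℝ} (h : Qprop α u) (h' : Qprop α u') : u = u' := by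
  obtain ⟨hu, h2, he⟩ := h
  obtain ⟨hu', h2', he'⟩ := h'
  by_contra hne
  rcases lt_or_gt_of_ne hne with hlt | hlt
  · have := Gfun_slope_lt hu hlt h2'
    rw [he, he', mul_div_cancel_right₀ _ (ne_of_gt hu), mul_div_cancel_right₀ _ (ne_of_gt hu')] at this
    exact lt_irrefl _ this
  · have := Gfun_slope_lt hu' hlt h2
    rw [he, he', mul_div_cancel_right₀ _ (ne_of_gt hu), mul_div_cancel_right₀ _ (ne_of_gt hu')] at this
    exact lt_irrefl _ this

lemma Q_lt {α β u u' : ℝ} (h : Qprop α u) (h' : Qprop β u') (hab : α < β) : u < u' := by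
  obtain ⟨hu, h2, he⟩ := h
  obtain ⟨hu', h2', he'⟩ := h'
  by_contra hle
  push_neg at hle
  rcases eq_or_lt_of_le hle with heq | hlt
  · subst heq
    have h := mul_right_cancel₀ (ne_of_gt hu) (he.symm.trans he')
    linarith
  · have := Gfun_slope_lt hu' hlt h2
    rw [he, he', mul_div_cancel_right₀ _ (ne_of_gt hu), mul_div_cancel_right₀ _ (ne_of_gt hu')] at this
    linarith

lemma Q_exists {α : ℝ} (hα : 3 < α) : ∃ u, Qprop α u := by
  -- lower point u₁ where Gfun u₁ < α u₁
  have hα0 : (0:ℝ) < α := by linarith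
  set ε : ℝ := min (1/2) ((α - 3)/(2*α)) with hε
  have hε0 : 0 < ε := lt_min (by norm_num) (div_pos (by linarith) (by linarith))
  have hε1 : ε ≤ 1/2 := min_le_left _ _
  have hε2 : ε ≤ (α-3)/(2*α) := min_le_right _ _
  set t₁ : ℝ := 1 + ε with ht₁
  have ht₁1 : 1 < t₁ := by linarith
  have ht₁2 : t₁ < 2 := by linarith
  set u₁ : ℝ := Real.log t₁ with hu₁
  have hu₁0 : 0 < u₁ := Real.log_pos ht₁1
  have hexp₁ : Real.exp u₁ = t₁ := Real.exp_log (by linarith)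
  have hexp₁2 : Real.exp u₁ < 2 := by rw [hexp₁]; exact ht₁2
  have hGd₁ : Gder u₁ ≤ α := by
    unfold Gder
    rw [hexp₁]
    rw [div_le_iff₀ (by nlinarith)]
    have h2 : 2*α*ε^2 ≤ ε*(α-3) := by
      calc 2*α*ε^2 = (2*α*ε) * ε := by ring
        _ ≤ (2*α*ε) * ((α-3)/(2*α)) := by
            exact mul_le_mul_of_nonneg_left hε2 (by positivity)
        _ = ε*(α-3) := by field_simp
    simp only [ht₁]
    nlinarith
  have hG₁ : Gfun u₁ < α * u₁ := by
    obtain ⟨c, hc0, hcu, heq⟩ := Gfun_mvt le_rfl hu₁0 hexp₁2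
    rw [Gfun_zero] at heq
    have : Gder c < Gder u₁ := Gder_lt hc0.le hcu hexp₁2
    nlinarith
  -- upper point u₂ where Gfun u₂ > α u₂
  set δ : ℝ := Real.exp (-(α * Real.log 2 + 1)) with hδ
  have hδ0 : 0 < δ := Real.exp_pos _
  have hδ1 : δ < 1 := by
    rw [hδ]
    apply Real.exp_lt_one_iff.2
    have := Real.log_pos (by norm_num : (1:ℝ) < 2)
    nlinarith
  set t₂ : ℝ := 2 - δ with ht₂
  have ht₂1 : 1 < t₂ := by linarith
  have ht₂2 : t₂ < 2 := by linarith
  set u₂ : ℝ := Real.log t₂ with hu₂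
  have hu₂0 : 0 < u₂ := Real.log_pos ht₂1
  have hexp₂ : Real.exp u₂ = t₂ := Real.exp_log (by linarith)
  have hexp₂2 : Real.exp u₂ < 2 := by rw [hexp₂]; exact ht₂2
  have hG₂ : α * u₂ < Gfun u₂ := by
    unfold Gfun
    rw [hexp₂]
    have e1 : 2 * t₂ - 1 = 3 - 2*δ := by rw [ht₂]; ring
    have e2 : 2 - t₂ = δ := by rw [ht₂]; ring
    rw [e1, e2]
    have h1 : (0:ℝ) ≤ Real.log (3 - 2*δ) := Real.log_nonneg (by linarith)
    have h2 : Real.log δ = -(α * Real.log 2 + 1) := Real.log_exp _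
    have h3 : u₂ < Real.log 2 := by
      rw [hu₂]
      exact Real.log_lt_log (by linarith) ht₂2
    have h4 : α * u₂ < α * Real.log 2 := by
      exact mul_lt_mul_of_pos_left h3 hα0
    linarith
  -- IVT
  have hcont : ContinuousOn (fun u => Gfun u - α * u) (Set.Icc u₁ u₂) := by
    apply ContinuousOn.sub
    · intro x hx
      have h1 : 1 ≤ Real.exp x := Real.one_le_exp (le_trans hu₁0.le hx.1)
      have h2 : Real.exp x < 2 := lt_of_le_of_lt (Real.exp_le_exp.2 hx.2) hexp₂2
      exact (Gfun_hasDeriv h1 h2).continuousAt.continuousWithinAt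
    · exact (continuous_const.mul continuous_id).continuousOn
  have hle : u₁ ≤ u₂ := by
    by_contra hgt
    push_neg at hgt
    have := Gfun_slope_lt hu₂0 hgt hexp₁2
    rw [div_lt_div_iff₀ hu₂0 hu₁0] at this
    nlinarith
  have h0mem : (0:ℝ) ∈ Set.Icc (Gfun u₁ - α * u₁) (Gfun u₂ - α * u₂) :=
    ⟨by linarith, by linarith⟩
  obtain ⟨u, hu, hu0⟩ := intermediate_value_Icc hle hcont h0mem
  refine ⟨u, lt_of_lt_of_le hu₁0 hu.1, lt_of_le_of_lt (Real.exp_le_exp.2 hu.2) hexp₂2, by linarith [hu0, sub_eq_zero.1 hu0]⟩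

def ufn (α : ℝ) : ℝ := if h : 3 < α then (Q_exists h).choose else 0

def vfn (α : ℝ) : ℝ := Real.exp (ufn α) / (1 + Real.exp (ufn α))

lemma ufn_spec {α : ℝ} (h : 3 < α) : Qprop α (ufn α) := by
  rw [ufn, dif_pos h]; exact (Q_exists h).choose_spec

lemma ufn_eq {α u : ℝ} (h : 3 < α) (hq : Qprop α u) : ufn α = u :=
  Q_unique (ufn_spec h) hq

lemma vfn_mem {α : ℝ} (h : 3 < α) : 1/2 < vfn α ∧ vfn α < 2/3 := by
  obtain ⟨hu, h2, _⟩ := ufn_spec h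
  have ht1 : 1 < Real.exp (ufn α) := by rw [← Real.exp_zero]; exact Real.exp_lt_exp.2 hu
  constructor
  · rw [vfn, lt_div_iff₀ (by linarith)]; linarith
  · rw [vfn, div_lt_iff₀ (by linarith)]; linarith

lemma vfn_strictMono : StrictMonoOn vfn (Set.Ioi (3:ℝ)) := by
  intro α hα β hβ hab
  have h1 := ufn_spec (Set.mem_Ioi.1 hα)
  have h2 := ufn_spec (Set.mem_Ioi.1 hβ)
  have hu : ufn α < ufn β := Q_lt h1 h2 hab
  have ht : Real.exp (ufn α) < Real.exp (ufn β) := Real.exp_lt_exp.2 hu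
  have e1 : (0:ℝ) < Real.exp (ufn α) := Real.exp_pos _
  have e2 : (0:ℝ) < Real.exp (ufn β) := Real.exp_pos _
  rw [vfn, vfn, div_lt_div_iff₀ (by linarith) (by linarith)]
  nlinarith

lemma alpha0_gt {t₀ : ℝ} (ht1 : 1 < t₀) (ht2 : t₀ < 2) :
    Qprop (Gfun (Real.log t₀) / Real.log t₀) (Real.log t₀) ∧
      3 < Gfun (Real.log t₀) / Real.log t₀ := by
  have hu0 : 0 < Real.log t₀ := Real.log_pos ht1
  have hexp : Real.exp (Real.log t₀) = t₀ := Real.exp_log (by linarith)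
  have he2 : Real.exp (Real.log t₀) < 2 := by rw [hexp]; exact ht2
  refine ⟨⟨hu0, he2, by field_simp⟩, ?_⟩
  have := Gfun_gt_three_mul hu0 he2
  rw [lt_div_iff₀ hu0]
  linarith

lemma vfn_tendsto_half :
    Filter.Tendsto vfn (nhdsWithin 3 (Set.Ioi (3:ℝ))) (nhds (1/2)) := by
  rw [tendsto_order]
  constructor
  · intro a ha
    filter_upwards [self_mem_nhdsWithin] with α hα
    exact lt_trans ha (vfn_mem (Set.mem_Ioi.1 hα)).1
  · intro b hb
    rcases le_or_gt (2/3 : ℝ) b with hb2 | hb2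
    · filter_upwards [self_mem_nhdsWithin] with α hα
      exact lt_of_lt_of_le (vfn_mem (Set.mem_Ioi.1 hα)).2 hb2
    · -- 1/2 < b < 2/3 : take t₀ = b/(1-b) ∈ (1,2)
      set t₀ : ℝ := b / (1 - b) with ht₀
      have hb1 : b < 1 := by linarith
      have h1b : 0 < 1 - b := by linarith
      have ht1 : 1 < t₀ := by rw [ht₀, lt_div_iff₀ h1b]; linarith
      have ht2 : t₀ < 2 := by rw [ht₀, div_lt_iff₀ h1b]; linarith
      obtain ⟨hq0, hgt3⟩ := alpha0_gt ht1 ht2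
      set α₀ := Gfun (Real.log t₀) / Real.log t₀
      filter_upwards [Ioo_mem_nhdsGT_of_mem (Set.left_mem_Ico.2 hgt3)] with α hα
      obtain ⟨hα3, hαlt⟩ := hα
      have hu : ufn α < Real.log t₀ := Q_lt (ufn_spec hα3) hq0 hαlt
      have ht : Real.exp (ufn α) < t₀ := by
        calc Real.exp (ufn α) < Real.exp (Real.log t₀) := Real.exp_lt_exp.2 hu
          _ = t₀ := Real.exp_log (by linarith)
      have e1 : (0:ℝ) < Real.exp (ufn α) := Real.exp_pos _
      rw [vfn, div_lt_iff₀ (by linarith)]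
      have : t₀ * (1 - b) = b := by rw [ht₀]; field_simp
      nlinarith

lemma vfn_tendsto_twothirds :
    Filter.Tendsto vfn Filter.atTop (nhds (2/3 : ℝ)) := by
  rw [tendsto_order]
  constructor
  · intro a ha
    rcases le_or_gt a (1/2 : ℝ) with ha2 | ha2
    · filter_upwards [Filter.eventually_gt_atTop 3] with α hα
      exact lt_of_le_of_lt ha2 (vfn_mem hα).1
    · set t₀ : ℝ := a / (1 - a) with ht₀
      have ha1 : a < 1 := by linarith
      have h1a : 0 < 1 - a := by linarith
      have ht1 : 1 < t₀ := by rw [ht₀, lt_div_iff₀ h1a]; linarith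
      have ht2 : t₀ < 2 := by rw [ht₀, div_lt_iff₀ h1a]; linarith
      obtain ⟨hq0, hgt3⟩ := alpha0_gt ht1 ht2
      set α₀ := Gfun (Real.log t₀) / Real.log t₀
      filter_upwards [Filter.eventually_gt_atTop (max 3 α₀)] with α hα
      have hα3 : 3 < α := lt_of_le_of_lt (le_max_left _ _) hα
      have hα0 : α₀ < α := lt_of_le_of_lt (le_max_right _ _) hα
      have hu : Real.log t₀ < ufn α := Q_lt hq0 (ufn_spec hα3) hα0
      have ht : t₀ < Real.exp (ufn α) := by
        calc t₀ = Real.exp (Real.log t₀) := (Real.exp_log (by linarith)).symm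
          _ < Real.exp (ufn α) := Real.exp_lt_exp.2 hu
      have e1 : (0:ℝ) < Real.exp (ufn α) := Real.exp_pos _
      rw [vfn, lt_div_iff₀ (by linarith)]
      have : t₀ * (1 - a) = a := by rw [ht₀]; field_simp
      nlinarith
  · intro b hb
    filter_upwards [Filter.eventually_gt_atTop 3] with α hα
    exact lt_trans (vfn_mem hα).2 hb

open Polynomial in
lemma charpoly_two (M : Matrix (Fin 2) (Fin 2) ℝ) :
    M.charpoly = (X - C (M 0 0)) * (X - C (M 1 1)) - C (M 0 1) * C (M 1 0) := by
  rw [Matrix.charpoly, Matrix.det_fin_two]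
  rw [Matrix.charmatrix_apply_eq, Matrix.charmatrix_apply_eq,
    Matrix.charmatrix_apply_ne _ _ _ (by decide), Matrix.charmatrix_apply_ne _ _ _ (by decide)]
  ring

lemma eig_iff (M : Matrix (Fin 2) (Fin 2) ℝ) (μ : ℂ) :
    IsEigenvalue M μ ↔ (μ - M 0 0) * (μ - M 1 1) - (M 0 1 : ℂ) * M 1 0 = 0 := by
  unfold IsEigenvalue
  rw [charpoly_two]
  simp [Polynomial.IsRoot]

/-- The off-diagonal magnitudes. -/
def aJ (α x y : ℝ) : ℝ := α / 3 * x ^ (α - 1) * y ^ α / (x ^ α + y ^ α) ^ 2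

lemma warmF0 (α : ℝ) (x y : ℝ) : warmF α p2 ![x,y] 0 =
    -x + ((1/3) * x^α / x^α + (1/3) * x^α / (x^α + y^α)) := by
  unfold warmF
  rw [show (Finset.univ.filter (fun A : Finset (Fin 2) => (0:Fin 2) ∈ A)) = {{0},{0,1}} by decide]
  rw [Finset.sum_insert (by decide), Finset.sum_singleton]
  simp [p2, Finset.sum_insert, Finset.sum_singleton]

lemma warmF1 (α : ℝ) (x y : ℝ) : warmF α p2 ![x,y] 1 =
    -y + ((1/3) * y^α / y^α + (1/3) * y^α / (x^α + y^α)) := by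
  unfold warmF
  rw [show (Finset.univ.filter (fun A : Finset (Fin 2) => (1:Fin 2) ∈ A)) = {{1},{0,1}} by decide]
  rw [Finset.sum_insert (by decide), Finset.sum_singleton]
  simp [p2, Finset.sum_insert, Finset.sum_singleton]

lemma warmD00 (α x y : ℝ) : warmD α p2 ![x,y] 0 0 = -1 + aJ α x y := by
  unfold warmD
  rw [Matrix.of_apply, if_pos rfl]
  rw [show (Finset.univ.filter (fun A : Finset (Fin 2) => (0:Fin 2) ∈ A)) = {{0},{0,1}} by decide]
  rw [Finset.sum_insert (by decide), Finset.sum_singleton]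
  simp [p2, Finset.sum_insert, Finset.sum_singleton, aJ]
  ring

lemma warmD11 (α x y : ℝ) : warmD α p2 ![x,y] 1 1 = -1 + aJ α y x := by
  unfold warmD
  rw [Matrix.of_apply, if_pos rfl]
  rw [show (Finset.univ.filter (fun A : Finset (Fin 2) => (1:Fin 2) ∈ A)) = {{1},{0,1}} by decide]
  rw [Finset.sum_insert (by decide), Finset.sum_singleton]
  simp [p2, Finset.sum_insert, Finset.sum_singleton, aJ]
  ring

lemma warmD01 (α x y : ℝ) : warmD α p2 ![x,y] 0 1 = -aJ α y x := by
  unfold warmD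
  rw [Matrix.of_apply, if_neg (by decide)]
  rw [show (Finset.univ.filter (fun A : Finset (Fin 2) => (0:Fin 2) ∈ A ∧ (1:Fin 2) ∈ A)) = {{0,1}} by decide]
  rw [Finset.sum_singleton]
  simp [p2, Finset.sum_insert, Finset.sum_singleton, aJ]
  ring

lemma warmD10 (α x y : ℝ) : warmD α p2 ![x,y] 1 0 = -aJ α x y := by
  unfold warmD
  rw [Matrix.of_apply, if_neg (by decide)]
  rw [show (Finset.univ.filter (fun A : Finset (Fin 2) => (1:Fin 2) ∈ A ∧ (0:Fin 2) ∈ A)) = {{0,1}} by decide]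
  rw [Finset.sum_singleton]
  simp [p2, Finset.sum_insert, Finset.sum_singleton, aJ]
  ring

lemma warmD_eig (α x y : ℝ) (μ : ℂ) :
    IsEigenvalue (warmD α p2 ![x,y]) μ ↔
      (μ + 1) * (μ + 1 - ((aJ α x y + aJ α y x : ℝ) : ℂ)) = 0 := by
  rw [eig_iff, warmD00, warmD11, warmD01, warmD10]
  push_cast
  constructor <;> intro h <;> linear_combination h

lemma stable_of {α x y : ℝ} (h : aJ α x y + aJ α y x < 1) :
    LinStable (warmD α p2 ![x,y]) := by
  intro μ hμ
  rw [warmD_eig] at hμ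
  rcases mul_eq_zero.1 hμ with h1 | h1
  · have : μ = -1 := by linear_combination h1
    rw [this]; norm_num
  · have : μ = ((aJ α x y + aJ α y x : ℝ) : ℂ) - 1 := by linear_combination h1
    rw [this]
    simp only [Complex.sub_re, Complex.ofReal_re, Complex.one_re]
    linarith

lemma unstable_of {α x y : ℝ} (h : 1 < aJ α x y + aJ α y x) :
    LinUnstable (warmD α p2 ![x,y]) := by
  refine ⟨((aJ α x y + aJ α y x - 1 : ℝ) : ℂ), ?_, by simp; linarith⟩
  rw [warmD_eig]
  push_cast
  ring

lemma critical_of {α x y : ℝ} (h : aJ α x y + aJ α y x = 1) :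
    CriticalPt (warmD α p2 ![x,y]) := by
  constructor
  · intro hst
    have h0 : IsEigenvalue (warmD α p2 ![x,y]) 0 := by
      rw [warmD_eig, h]; push_cast; ring
    have := hst 0 h0
    simp at this
  · rintro ⟨μ, hμ, hre⟩
    rw [warmD_eig, h] at hμ
    rcases mul_eq_zero.1 hμ with h1 | h1
    · have : μ = -1 := by linear_combination h1
      rw [this] at hre; simp at hre; linarith
    · have : μ = 0 := by push_cast at h1; linear_combination h1
      rw [this] at hre; simp at hre

lemma F_zero_of {α x y : ℝ} (hx : 0 < x) (hy : 0 < y)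
    (hxa : x ^ α = (3*x - 1) * (x ^ α + y ^ α))
    (hya : y ^ α = (3*y - 1) * (x ^ α + y ^ α)) :
    ∀ i, warmF α p2 ![x,y] i = 0 := by
  have hxp : (0:ℝ) < x ^ α := Real.rpow_pos_of_pos hx α
  have hyp : (0:ℝ) < y ^ α := Real.rpow_pos_of_pos hy α
  have hS : (0:ℝ) < x ^ α + y ^ α := by linarith
  have e0 : (1:ℝ)/3 * x ^ α / x ^ α = 1/3 := by
    rw [mul_div_assoc, div_self (ne_of_gt hxp), mul_one]
  have e1 : (1:ℝ)/3 * y ^ α / y ^ α = 1/3 := by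
    rw [mul_div_assoc, div_self (ne_of_gt hyp), mul_one]
  have e2 : x ^ α / (x ^ α + y ^ α) = 3*x - 1 := by
    rw [div_eq_iff (ne_of_gt hS)]; exact hxa
  have e3 : y ^ α / (x ^ α + y ^ α) = 3*y - 1 := by
    rw [div_eq_iff (ne_of_gt hS)]; exact hya
  intro i
  fin_cases i
  · show warmF α p2 ![x,y] 0 = 0
    rw [warmF0, e0, mul_div_assoc, e2]
    ring
  · show warmF α p2 ![x,y] 1 = 0
    rw [warmF1, e1, mul_div_assoc, e3]
    ring

lemma eq_of_F_zero {α x y : ℝ} (hα : 0 < α) (hx : 0 < x) (hy : 0 < y)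
    (h0 : warmF α p2 ![x,y] 0 = 0) (h1 : warmF α p2 ![x,y] 1 = 0) :
    x ^ α = (3*x - 1) * (x ^ α + y ^ α) ∧ y ^ α = (3*y - 1) * (x ^ α + y ^ α) := by
  have hxp : (0:ℝ) < x ^ α := Real.rpow_pos_of_pos hx α
  have hyp : (0:ℝ) < y ^ α := Real.rpow_pos_of_pos hy α
  have hS : (0:ℝ) < x ^ α + y ^ α := by linarith
  have e0 : (1:ℝ)/3 * x ^ α / x ^ α = 1/3 := by
    rw [mul_div_assoc, div_self (ne_of_gt hxp), mul_one]
  have e1 : (1:ℝ)/3 * y ^ α / y ^ α = 1/3 := by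
    rw [mul_div_assoc, div_self (ne_of_gt hyp), mul_one]
  rw [warmF0, e0, mul_div_assoc] at h0
  rw [warmF1, e1, mul_div_assoc] at h1
  have e2 : x ^ α / (x ^ α + y ^ α) = 3*x - 1 := by linarith
  have e3 : y ^ α / (x ^ α + y ^ α) = 3*y - 1 := by linarith
  constructor
  · rw [← e2]; field_simp
  · rw [← e3]; field_simp

/-- the aJ-sum at an equilibrium point -/
lemma aJ_sum_eq {α x y : ℝ} (hx : 0 < x) (hy : 0 < y)
    (hxa : x ^ α = (3*x - 1) * (x ^ α + y ^ α))
    (hya : y ^ α = (3*y - 1) * (x ^ α + y ^ α)) :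
    aJ α x y + aJ α y x = α / 3 * (3*x-1) * (3*y-1) * (1/x + 1/y) := by
  have hxp : (0:ℝ) < x ^ α := Real.rpow_pos_of_pos hx α
  have hyp : (0:ℝ) < y ^ α := Real.rpow_pos_of_pos hy α
  have hx1 : x ^ (α - 1) = x ^ α / x := by
    rw [Real.rpow_sub hx, Real.rpow_one]
  have hy1 : y ^ (α - 1) = y ^ α / y := by
    rw [Real.rpow_sub hy, Real.rpow_one]
  obtain ⟨S, hSdef⟩ : ∃ S : ℝ, S = x ^ α + y ^ α := ⟨_, rfl⟩
  have hS : (0:ℝ) < S := by rw [hSdef]; linarith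
  rw [← hSdef] at hxa hya
  unfold aJ
  rw [show y ^ α + x ^ α = x ^ α + y ^ α from add_comm _ _, ← hSdef, hx1, hy1, hxa, hya]
  field_simp

lemma aJ_sum_half (α : ℝ) :
    aJ α (1/2) (1/2) + aJ α (1/2) (1/2) = α / 3 := by
  have hp : (0:ℝ) < (1/2 : ℝ) ^ α := Real.rpow_pos_of_pos (by norm_num) α
  have h1 : ((1:ℝ)/2) ^ (α - 1) = (1/2 : ℝ) ^ α / (1/2) := by
    rw [Real.rpow_sub (by norm_num), Real.rpow_one]
  unfold aJ
  rw [h1]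
  field_simp
  ring


lemma Q_to_eq {α u x y : ℝ} (hq : Qprop α u)
    (hx : x = Real.exp u / (1 + Real.exp u)) (hy : y = 1 - x) :
    x ^ α = (3*x - 1) * (x ^ α + y ^ α) ∧ y ^ α = (3*y - 1) * (x ^ α + y ^ α) := by
  obtain ⟨hu, h2, hG⟩ := hq
  set t := Real.exp u with ht
  have ht1 : 1 < t := by rw [ht, ← Real.exp_zero]; exact Real.exp_lt_exp.2 hu
  have h1t : (0:ℝ) < 1 + t := by linarith
  have h2t : (0:ℝ) < 2 - t := by linarith
  have h2t1 : (0:ℝ) < 2*t - 1 := by linarith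
  have hyv : y = 1 / (1 + t) := by rw [hy, hx]; field_simp; ring
  have hy0 : 0 < y := by rw [hyv]; positivity
  have hxty : x = t * y := by rw [hx, hyv]; field_simp
  have htα : t ^ α = (2*t - 1) / (2 - t) := by
    rw [Real.rpow_def_of_pos (by linarith), Real.log_exp, mul_comm, hG.symm]
    unfold Gfun
    rw [← ht, Real.exp_sub, Real.exp_log h2t1, Real.exp_log h2t]
  have hxα : x ^ α = t ^ α * y ^ α := by
    rw [hxty]; exact Real.mul_rpow (by linarith) hy0.le
  have key1 : t ^ α = (3*x - 1) * (t ^ α + 1) := by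
    rw [htα, hx]
    field_simp
    ring
  have key2 : (1:ℝ) = (3*y - 1) * (t ^ α + 1) := by
    rw [htα, hyv]
    field_simp
    ring
  constructor
  · calc x ^ α = ((3*x - 1) * (t ^ α + 1)) * y ^ α := by rw [hxα, ← key1]
      _ = (3*x - 1) * (x ^ α + y ^ α) := by rw [hxα]; ring
  · calc y ^ α = ((3*y - 1) * (t ^ α + 1)) * y ^ α := by rw [← key2, one_mul]
      _ = (3*y - 1) * (x ^ α + y ^ α) := by rw [hxα]; ring

lemma Q_stab {α u x y : ℝ} (hq : Qprop α u)
    (hx : x = Real.exp u / (1 + Real.exp u)) (hy : y = 1 - x) :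
    α / 3 * (3*x-1) * (3*y-1) * (1/x + 1/y) < 1 := by
  obtain ⟨hu, h2, hG⟩ := hq
  have hlt : Gfun u < u * Gder u := Gfun_lt_mul_Gder hu h2
  set t := Real.exp u with ht
  have ht1 : 1 < t := by rw [ht, ← Real.exp_zero]; exact Real.exp_lt_exp.2 hu
  have h1t : (0:ℝ) < 1 + t := by linarith
  have h2t : (0:ℝ) < 2 - t := by linarith
  have h2t1 : (0:ℝ) < 2*t - 1 := by linarith
  have ht0 : (0:ℝ) < t := by linarith
  have hαlt : α < Gder u := by
    rw [hG] at hlt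
    exact lt_of_mul_lt_mul_left (by linarith [hlt]) hu.le
  have hGd : Gder u = 3*t / ((2*t-1)*(2-t)) := by unfold Gder; rw [← ht]
  rw [hGd, lt_div_iff₀ (by positivity)] at hαlt
  have e : α / 3 * (3*x-1) * (3*y-1) * (1/x + 1/y) = α * ((2*t-1) * (2-t)) / (3*t) := by
    rw [hy, hx]
    field_simp
    ring
  rw [e, div_lt_one (by positivity)]
  linarith

lemma eq_to_Q {α x y : ℝ} (hy : 0 < y) (hyx : y < x) (hxy : x + y = 1)
    (hxa : x ^ α = (3*x - 1) * (x ^ α + y ^ α))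
    (hya : y ^ α = (3*y - 1) * (x ^ α + y ^ α)) :
    Qprop α (Real.log (x/y)) ∧
      x = Real.exp (Real.log (x/y)) / (1 + Real.exp (Real.log (x/y))) := by
  have hx : 0 < x := lt_trans hy hyx
  have hxp : (0:ℝ) < x ^ α := Real.rpow_pos_of_pos hx α
  have hyp : (0:ℝ) < y ^ α := Real.rpow_pos_of_pos hy α
  have hS : (0:ℝ) < x ^ α + y ^ α := by linarith
  have h3x : 0 < 3*x - 1 := by
    by_contra h
    push_neg at h
    nlinarith [hxa]
  have h3y : 0 < 3*y - 1 := by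
    by_contra h
    push_neg at h
    nlinarith [hya]
  have ht0 : 0 < x / y := div_pos hx hy
  have hexp : Real.exp (Real.log (x/y)) = x / y := Real.exp_log ht0
  have ht1 : 1 < x / y := (one_lt_div hy).2 hyx
  have hu0 : 0 < Real.log (x/y) := Real.log_pos ht1
  have ht2 : x / y < 2 := by rw [div_lt_iff₀ hy]; linarith
  have htα : (x/y) ^ α = (3*x-1) / (3*y-1) := by
    rw [Real.div_rpow hx.le hy.le, div_eq_div_iff (ne_of_gt hyp) (ne_of_gt h3y)]
    linear_combination (3*y-1) * hxa - (3*x-1) * hya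
  have hGu : Gfun (Real.log (x/y)) = α * Real.log (x/y) := by
    unfold Gfun
    rw [hexp]
    have e1 : 2 * (x/y) - 1 = (3*x - 1)/y := by field_simp; linarith
    have e2 : 2 - x/y = (3*y - 1)/y := by field_simp; linarith
    rw [e1, e2, Real.log_div (ne_of_gt h3x) (ne_of_gt hy),
      Real.log_div (ne_of_gt h3y) (ne_of_gt hy)]
    rw [← Real.log_rpow ht0, htα, Real.log_div (ne_of_gt h3x) (ne_of_gt h3y)]
    ring
  refine ⟨⟨hu0, by rw [hexp]; exact ht2, hGu⟩, ?_⟩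
  rw [hexp]
  field_simp
  nlinarith [hxy]

lemma vec_eq (w : Fin 2 → ℝ) {a b : ℝ} (h0 : w 0 = a) (h1 : w 1 = b) : w = ![a, b] := by
  funext i
  fin_cases i
  · simpa using h0
  · simpa using h1

lemma half_equil (α : ℝ) : ∀ i, warmF α p2 ![(1:ℝ)/2, 1/2] i = 0 :=
  F_zero_of (by norm_num) (by norm_num) (by ring) (by ring)

lemma equil_cases {α : ℝ} (hα : 1 < α) (w : Fin 2 → ℝ) (hs : InSimplex w)
    (hF : ∀ i, warmF α p2 w i = 0) :
    (w 0 = 1/2 ∧ w 1 = 1/2) ∨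
    (∃ u, Qprop α u ∧ w 0 = Real.exp u / (1 + Real.exp u) ∧ w 1 = 1 - w 0) ∨
    (∃ u, Qprop α u ∧ w 1 = Real.exp u / (1 + Real.exp u) ∧ w 0 = 1 - w 1) := by
  obtain ⟨hnn, hsum⟩ := hs
  rw [Fin.sum_univ_two] at hsum
  have hw : w = ![w 0, w 1] := vec_eq w rfl rfl
  rw [hw] at hF
  have hαne : α ≠ 0 := by linarith
  rcases eq_or_lt_of_le (hnn 0) with h0 | h0
  · exfalso
    have h1 : w 1 = 1 := by linarith
    have h := hF 1
    rw [warmF1, ← h0, h1, Real.zero_rpow hαne, Real.one_rpow] at h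
    norm_num at h
  rcases eq_or_lt_of_le (hnn 1) with h1 | h1
  · exfalso
    have h0' : w 0 = 1 := by linarith
    have h := hF 0
    rw [warmF0, ← h1, h0', Real.zero_rpow hαne, Real.one_rpow] at h
    norm_num at h
  obtain ⟨hxa, hya⟩ := eq_of_F_zero (by linarith) h0 h1 (hF 0) (hF 1)
  rcases lt_trichotomy (w 0) (w 1) with hlt | heq | hgt
  · right; right
    obtain ⟨hq, hx⟩ := eq_to_Q h0 hlt (by linarith)
      (by linear_combination hya) (by linear_combination hxa)
    exact ⟨Real.log (w 1 / w 0), hq, hx, by linarith⟩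
  · exact Or.inl ⟨by linarith, by linarith⟩
  · right; left
    obtain ⟨hq, hx⟩ := eq_to_Q h1 hgt hsum hxa hya
    exact ⟨Real.log (w 0 / w 1), hq, hx, by linarith⟩

/-- **The WARM star graph with two edges.** -/
theorem star_two_edges :
    (∀ α : ℝ, 1 < α → α ≤ 3 →
      (∀ i, warmF α p2 ![(1 : ℝ) / 2, 1 / 2] i = 0) ∧
      (∀ w : Fin 2 → ℝ, InSimplex w → (∀ i, warmF α p2 w i = 0) →
        w = ![(1 : ℝ) / 2, 1 / 2]) ∧
      (α < 3 → LinStable (warmD α p2 ![(1 : ℝ) / 2, 1 / 2])) ∧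
      (α = 3 → CriticalPt (warmD α p2 ![(1 : ℝ) / 2, 1 / 2]))) ∧
    ∃ vf : ℝ → ℝ,
      StrictMonoOn vf (Set.Ioi (3 : ℝ)) ∧
      Filter.Tendsto vf (nhdsWithin 3 (Set.Ioi (3 : ℝ))) (nhds (1 / 2)) ∧
      Filter.Tendsto vf Filter.atTop (nhds (2 / 3)) ∧
      ∀ α : ℝ, 3 < α →
        1 / 2 < vf α ∧ vf α < 2 / 3 ∧
        (∀ i, warmF α p2 ![(1 : ℝ) / 2, 1 / 2] i = 0) ∧
        (∀ i, warmF α p2 ![vf α, 1 - vf α] i = 0) ∧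
        (∀ i, warmF α p2 ![1 - vf α, vf α] i = 0) ∧
        (∀ w : Fin 2 → ℝ, InSimplex w → (∀ i, warmF α p2 w i = 0) →
          w = ![(1 : ℝ) / 2, 1 / 2] ∨ w = ![vf α, 1 - vf α] ∨ w = ![1 - vf α, vf α]) ∧
        LinStable (warmD α p2 ![vf α, 1 - vf α]) ∧
        LinStable (warmD α p2 ![1 - vf α, vf α]) ∧
        LinUnstable (warmD α p2 ![(1 : ℝ) / 2, 1 / 2]) := by
  constructor
  · intro α hα1 hα3
    refine ⟨half_equil α, ?_, ?_, ?_⟩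
    · intro w hs hF
      rcases equil_cases hα1 w hs hF with ⟨h0, h1⟩ | ⟨u, hq, _, _⟩ | ⟨u, hq, _, _⟩
      · exact vec_eq w h0 h1
      · exfalso
        have h3 := Gfun_gt_three_mul hq.1 hq.2.1
        rw [hq.2.2] at h3
        nlinarith [hq.1]
      · exfalso
        have h3 := Gfun_gt_three_mul hq.1 hq.2.1
        rw [hq.2.2] at h3
        nlinarith [hq.1]
    · intro h3
      exact stable_of (by rw [aJ_sum_half]; linarith)
    · intro h3
      exact critical_of (by rw [aJ_sum_half, h3]; norm_num)
  · refine ⟨vfn, vfn_strictMono, vfn_tendsto_half, vfn_tendsto_twothirds, ?_⟩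
    intro α hα
    have hq := ufn_spec hα
    have hmem := vfn_mem hα
    have hvx : vfn α = Real.exp (ufn α) / (1 + Real.exp (ufn α)) := rfl
    obtain ⟨hxa, hya⟩ := Q_to_eq hq hvx rfl
    have hv0 : 0 < vfn α := by linarith [hmem.1]
    have hv1 : 0 < 1 - vfn α := by linarith [hmem.2]
    have hya' : (1 - vfn α) ^ α = (3*(1 - vfn α) - 1) * ((1 - vfn α) ^ α + (vfn α) ^ α) := by
      linear_combination hya
    have hxa' : (vfn α) ^ α = (3*(vfn α) - 1) * ((1 - vfn α) ^ α + (vfn α) ^ α) := by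
      linear_combination hxa
    have hstab := Q_stab hq hvx rfl
    refine ⟨hmem.1, hmem.2, half_equil α, F_zero_of hv0 hv1 hxa hya,
      F_zero_of hv1 hv0 hya' hxa', ?_, ?_, ?_, ?_⟩
    · intro w hs hF
      rcases equil_cases (by linarith) w hs hF with ⟨h0, h1⟩ | ⟨u, hq', h0, h1⟩ | ⟨u, hq', h1, h0⟩
      · exact Or.inl (vec_eq w h0 h1)
      · have hu : u = ufn α := Q_unique hq' hq
        rw [hu, ← hvx] at h0
        exact Or.inr (Or.inl (vec_eq w h0 (by linarith)))
      · have hu : u = ufn α := Q_unique hq' hq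
        rw [hu, ← hvx] at h1
        exact Or.inr (Or.inr (vec_eq w (by linarith) h1))
    · exact stable_of (by rw [aJ_sum_eq hv0 hv1 hxa hya]; exact hstab)
    · refine stable_of ?_
      rw [add_comm, aJ_sum_eq hv0 hv1 hxa hya]
      exact hstab
    · exact unstable_of (by rw [aJ_sum_half]; linarith)

end
end

section
/- Consider the fixed-m uniform WARM with n ≥ 3 colours and 2 ≤ m ≤ n−1, and let k be an integer with n−m+1 ≤ k ≤ n−1. Then the vector v = (1/k, …, 1/k, 0, …, 0) (value 1/k in the first k coordinates, 0 in the remaining n−k) is an equilibrium for every α > 1, and it is linearly stable if and only if α < C(n,m) / (k² · Σ_{r = max(m−k,0)}^{min(n−k, m−2)} C(n−k, r)·C(k−2, m−r−2)/(m−r)²), while it is critical if equality holds. -/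
open Finset

noncomputable section

/-- The fixed-`m` uniform WARM weight: uniform over all subsets of size `m`. -/
def unifP (n m : ℕ) : Finset (Fin n) → ℝ :=
  fun A => if A.card = m then 1 / (n.choose m : ℝ) else 0


/-! ### Auxiliary machinery -/

open Finset

lemma isEigenvalue_iff_det' {ι : Type*} [Fintype ι] [DecidableEq ι] (M : Matrix ι ι ℝ) (μ : ℂ) :
    IsEigenvalue M μ ↔
      (Matrix.of fun i j => (if i = j then μ else 0) - (M i j : ℂ)).det = 0 := by
  have h1 : M.charpoly.map (algebraMap ℝ ℂ) = (M.map (algebraMap ℝ ℂ)).charpoly :=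
    (Matrix.charpoly_map M _).symm
  have h2 : ((M.map (algebraMap ℝ ℂ)).charpoly).eval μ
      = (Matrix.of fun i j => (if i = j then μ else 0) - (M i j : ℂ)).det := by
    rw [Matrix.charpoly, ← Polynomial.coe_evalRingHom, RingHom.map_det]
    congr 1
    ext i j
    by_cases h : i = j
    · subst h
      simp [Matrix.charmatrix_apply_eq]
    · simp [Matrix.charmatrix_apply_ne _ _ _ h, h]
  rw [IsEigenvalue, Polynomial.IsRoot, h1, h2]

/-- The structured matrix `-1 + β P` with `P` the projection associated to `K`. -/
def Dm {ι : Type*} [DecidableEq ι] (K : Finset ι) (β : ℝ) : Matrix ι ι ℝ :=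
  Matrix.of fun i j =>
    if i ∈ K ∧ j ∈ K then (if i = j then β - 1 else 0) - β / K.card
    else if i = j then (-1 : ℝ) else 0

/-- The complex projection matrix. -/
def Pm {ι : Type*} [DecidableEq ι] (K : Finset ι) : Matrix ι ι ℂ :=
  Matrix.of fun i j =>
    if i ∈ K ∧ j ∈ K then (if i = j then 1 else 0) - 1 / (K.card : ℂ) else 0

lemma Pm_proj {ι : Type*} [Fintype ι] [DecidableEq ι] (K : Finset ι) (hK : K.Nonempty) :
    Pm K * Pm K = Pm K := by
  have hk0 : (K.card : ℂ) ≠ 0 := by exact_mod_cast (Finset.card_pos.mpr hK).ne'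
  set c : ℂ := 1 / (K.card : ℂ) with hc
  ext i j
  simp only [Matrix.mul_apply, Pm, Matrix.of_apply]
  by_cases hi : i ∈ K
  · by_cases hj : j ∈ K
    · rw [← Finset.sum_subset (K.subset_univ) (fun l _ hl => by simp [hl])]
      have key : ∀ l ∈ K, (if i ∈ K ∧ l ∈ K then (if i = l then (1:ℂ) else 0) - c else 0) *
          (if l ∈ K ∧ j ∈ K then (if l = j then (1:ℂ) else 0) - c else 0)
          = ((if i = l then (if l = j then (1:ℂ) else 0) else 0)
              - c * (if i = l then 1 else 0) - c * (if l = j then 1 else 0) + c^2) := by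
        intro l hl
        simp only [hi, hj, hl, and_true, true_and, if_true]
        by_cases h1 : i = l <;> by_cases h2 : l = j
        · simp [h1, h2]; ring
        · simp [h1, h2]; ring
        · have hij : i ≠ j := fun h => h1 (h.trans h2.symm)
          simp [h1, h2, hij]; ring
        · simp [h1, h2]; ring
      rw [Finset.sum_congr rfl key]
      simp only [Finset.sum_add_distrib, Finset.sum_sub_distrib, Finset.sum_const,
        Finset.sum_ite_eq, Finset.sum_ite_eq', hi, hj, and_true, true_and, if_true,
        nsmul_eq_mul, mul_one]
      rw [← Finset.mul_sum, ← Finset.mul_sum, Finset.sum_ite_eq K i (fun _ => (1:ℂ)),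
        Finset.sum_ite_eq' K j (fun _ => (1:ℂ)), if_pos hi, if_pos hj]
      by_cases hij : i = j <;> simp only [hij, if_true, if_false] <;> field_simp <;>
        linear_combination ((K.card:ℂ) * ((K.card:ℂ))⁻¹ - 1) * mul_inv_cancel₀ hk0
    · simp only [hj, and_false, if_false]
      apply Finset.sum_eq_zero
      intro l _
      simp [hj]
  · simp only [hi, false_and, if_false]
    apply Finset.sum_eq_zero
    intro l _
    simp [hi]

lemma Dm_charmatrix {ι : Type*} [Fintype ι] [DecidableEq ι] (K : Finset ι) (β : ℝ) (μ : ℂ) :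
    (Matrix.of fun i j => (if i = j then μ else 0) - ((Dm K β) i j : ℂ))
      = (μ + 1) • (1 : Matrix ι ι ℂ) - (β : ℂ) • Pm K := by
  ext i j
  simp only [Matrix.of_apply, Dm, Pm, Matrix.sub_apply, Matrix.smul_apply, Matrix.one_apply,
    smul_eq_mul]
  by_cases hi : i ∈ K <;> by_cases hj : j ∈ K <;> by_cases hij : i = j <;>
    simp [hi, hj, hij] <;> push_cast <;> ring

lemma not_eig_of_ne {ι : Type*} [Fintype ι] [DecidableEq ι] (K : Finset ι) (hK : K.Nonempty)
    (β : ℝ) (μ : ℂ) (h1 : μ ≠ -1) (h2 : μ ≠ (β : ℂ) - 1) : ¬ IsEigenvalue (Dm K β) μ := by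
  rw [isEigenvalue_iff_det', Dm_charmatrix]
  set x : ℂ := μ + 1 with hx
  have hx0 : x ≠ 0 := fun h => h1 (by rw [← sub_eq_zero]; rw [hx] at h; linear_combination h)
  have hxb : x - (β:ℂ) ≠ 0 := fun h => h2 (by rw [← sub_eq_zero]; rw [hx] at h; linear_combination h)
  set b : ℂ := (β : ℂ)
  set B : Matrix ι ι ℂ := x⁻¹ • (1 : Matrix ι ι ℂ) + (x⁻¹ * (b / (x - b))) • Pm K with hB
  have hmul : (x • (1 : Matrix ι ι ℂ) - b • Pm K) * B = 1 := by
    rw [hB, sub_mul, mul_add, mul_add, smul_mul_assoc, smul_mul_assoc, smul_mul_assoc,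
      smul_mul_assoc, mul_smul_comm, mul_smul_comm, mul_smul_comm, mul_smul_comm,
      one_mul, mul_one, Pm_proj K hK, smul_smul, smul_smul, smul_smul, smul_smul]
    have c1 : x * x⁻¹ = 1 := mul_inv_cancel₀ hx0
    have c2 : x * (x⁻¹ * (b / (x - b))) - (b * x⁻¹ + b * (x⁻¹ * (b / (x - b)))) = 0 := by
      field_simp
      ring
    rw [c1, one_smul, add_sub_assoc, one_mul (Pm K),
      show (x*(x⁻¹*(b/(x-b)))) • Pm K - ((b*x⁻¹) • Pm K + (b*(x⁻¹*(b/(x-b)))) • Pm K)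
        = (x*(x⁻¹*(b/(x-b))) - (b*x⁻¹ + b*(x⁻¹*(b/(x-b))))) • Pm K from by module,
      c2, zero_smul, add_zero]
  exact Matrix.det_ne_zero_of_right_inverse hmul

lemma eig_at {ι : Type*} [Fintype ι] [DecidableEq ι] (K : Finset ι) (hK : 2 ≤ K.card) (β : ℝ) :
    IsEigenvalue (Dm K β) ((β : ℂ) - 1) := by
  rw [isEigenvalue_iff_det', Dm_charmatrix]
  obtain ⟨i, hi, j, hj, hij⟩ := Finset.one_lt_card.mp hK
  apply Matrix.det_zero_of_row_eq hij
  funext l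
  by_cases hl : l ∈ K
  · by_cases hil : i = l <;> by_cases hjl : j = l <;>
      simp [Pm, Matrix.one_apply, hi, hj, hl, hil, hjl, Matrix.sub_apply, Matrix.smul_apply] <;>
      ring
  · have h1 : i ≠ l := fun h => hl (h ▸ hi)
    have h2 : j ≠ l := fun h => hl (h ▸ hj)
    simp [Pm, Matrix.one_apply, hl, h1, h2, Matrix.sub_apply, Matrix.smul_apply]

/-! ### Combinatorics -/

def Kset (n k : ℕ) : Finset (Fin n) := Finset.univ.filter (fun i => (i : ℕ) < k)

lemma Kset_card (n k : ℕ) (hkn : k ≤ n) : (Kset n k).card = k := by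
  have : Kset n k = (Finset.range k).attachFin
      (fun m hm => lt_of_lt_of_le (mem_range.mp hm) hkn) := by
    ext i
    simp [Kset, Finset.mem_attachFin]
  rw [this, Finset.card_attachFin, Finset.card_range]

lemma Kset_compl_card (n k : ℕ) (hkn : k ≤ n) : (Kset n k)ᶜ.card = n - k := by
  rw [Finset.card_compl, Kset_card n k hkn, Fintype.card_fin]

lemma count_lemma (n m k : ℕ) (hkn : k ≤ n) (S : Finset (Fin n)) (hS : S ⊆ Kset n k)
    (a : ℕ) (ha1 : S.card ≤ a) (ham : a ≤ m) :
    (Finset.univ.filter (fun A : Finset (Fin n) =>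
        (A.card = m ∧ S ⊆ A) ∧ (A ∩ Kset n k).card = a)).card
      = (k - S.card).choose (a - S.card) * (n - k).choose (m - a) := by
  set K := Kset n k with hK
  have hprod : ((K \ S).powersetCard (a - S.card) ×ˢ (Kᶜ).powersetCard (m - a)).card
      = (k - S.card).choose (a - S.card) * (n - k).choose (m - a) := by
    rw [Finset.card_product, Finset.card_powersetCard, Finset.card_powersetCard,
      Finset.card_sdiff_of_subset hS, hK, Kset_card n k hkn, Kset_compl_card n k hkn]
  rw [← hprod]
  apply Finset.card_nbij' (fun A => ((A ∩ K) \ S, A \ K))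
      (fun BC => S ∪ BC.1 ∪ BC.2)
  · intro A hA
    simp only [Finset.mem_coe, Finset.mem_filter, Finset.mem_univ, true_and] at hA
    obtain ⟨⟨hcard, hSA⟩, hint⟩ := hA
    have hSAK : S ⊆ A ∩ K := Finset.subset_inter hSA hS
    simp only [Finset.mem_coe, Finset.mem_product, Finset.mem_powersetCard]
    refine ⟨⟨?_, ?_⟩, ?_, ?_⟩
    · exact Finset.sdiff_subset_sdiff Finset.inter_subset_right (le_refl S)
    · rw [Finset.card_sdiff_of_subset hSAK, hint]
    · intro x hx
      simp only [Finset.mem_sdiff] at hx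
      simp only [Finset.mem_compl]
      exact hx.2
    · rw [← Finset.sdiff_inter_self_left A K, Finset.card_sdiff_of_subset Finset.inter_subset_left,
        hcard, hint]
  · intro BC hBC
    simp only [Finset.mem_coe, Finset.mem_product, Finset.mem_powersetCard] at hBC
    obtain ⟨⟨hB, hBcard⟩, hC, hCcard⟩ := hBC
    have hBK : BC.1 ⊆ K := hB.trans Finset.sdiff_subset
    have hBS : Disjoint S BC.1 := by
      apply Finset.disjoint_left.mpr
      intro x hxS hxB
      exact (Finset.mem_sdiff.mp (hB hxB)).2 hxS
    have hCK : ∀ x ∈ BC.2, x ∉ K := fun x hx => Finset.mem_compl.mp (hC hx)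
    have hSBC : Disjoint (S ∪ BC.1) BC.2 := by
      apply Finset.disjoint_left.mpr
      intro x hx hx2
      rcases Finset.mem_union.mp hx with h | h
      · exact hCK x hx2 (hS h)
      · exact hCK x hx2 (hBK h)
    have hint : (S ∪ BC.1 ∪ BC.2) ∩ K = S ∪ BC.1 := by
      ext x
      simp only [Finset.mem_inter, Finset.mem_union]
      constructor
      · rintro ⟨h | h, hK2⟩
        · exact h
        · exact absurd hK2 (hCK x h)
      · rintro (h | h)
        · exact ⟨Or.inl (Or.inl h), hS h⟩
        · exact ⟨Or.inl (Or.inr h), hBK h⟩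
    have hcardSB : (S ∪ BC.1).card = a := by
      rw [Finset.card_union_of_disjoint hBS, hBcard, Nat.add_sub_cancel' ha1]
    simp only [Finset.mem_coe, Finset.mem_filter, Finset.mem_univ, true_and]
    refine ⟨⟨?_, ?_⟩, ?_⟩
    · rw [Finset.card_union_of_disjoint hSBC, hcardSB, hCcard, Nat.add_sub_cancel' ham]
    · exact (Finset.subset_union_left).trans Finset.subset_union_left
    · rw [hint, hcardSB]
  · intro A hA
    simp only [Finset.mem_coe, Finset.mem_filter, Finset.mem_univ, true_and] at hA
    obtain ⟨⟨hcard, hSA⟩, hint⟩ := hA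
    ext x
    have hx := @hSA x
    simp only [Finset.mem_union, Finset.mem_sdiff, Finset.mem_inter]
    by_cases hxK : x ∈ K <;> by_cases hxS : x ∈ S <;> tauto
  · intro BC hBC
    simp only [Finset.mem_coe, Finset.mem_product, Finset.mem_powersetCard] at hBC
    obtain ⟨⟨hB, _⟩, hC, _⟩ := hBC
    have hBK : ∀ x ∈ BC.1, x ∈ K ∧ x ∉ S := fun x hx => Finset.mem_sdiff.mp (hB hx)
    have hCK : ∀ x ∈ BC.2, x ∉ K := fun x hx => Finset.mem_compl.mp (hC hx)
    have hSK : ∀ x ∈ S, x ∈ K := fun x hx => hS hx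
    ext1
    · ext x
      have h1 := hBK x; have h2 := hCK x; have h3 := hSK x
      simp only [Finset.mem_sdiff, Finset.mem_inter, Finset.mem_union]
      tauto
    · ext x
      have h1 := hBK x; have h2 := hCK x; have h3 := hSK x
      simp only [Finset.mem_sdiff, Finset.mem_union]
      tauto

lemma master_sum (n m k : ℕ) (hkn : k ≤ n) (S : Finset (Fin n)) (hS : S ⊆ Kset n k)
    (f : ℕ → ℝ) :
    ∑ A ∈ Finset.univ.filter (fun A : Finset (Fin n) => A.card = m ∧ S ⊆ A),
        f ((A ∩ Kset n k).card)
      = ∑ a ∈ Finset.Icc S.card m,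
          ((k - S.card).choose (a - S.card) * (n - k).choose (m - a) : ℝ) * f a := by
  set K := Kset n k with hK
  rw [← Finset.sum_fiberwise_of_maps_to' (t := Finset.Icc S.card m)
    (g := fun A => (A ∩ K).card) ?_ f]
  · apply Finset.sum_congr rfl
    intro a ha
    rw [Finset.sum_const, Finset.filter_filter, count_lemma n m k hkn S hS a
      (Finset.mem_Icc.mp ha).1 (Finset.mem_Icc.mp ha).2, nsmul_eq_mul]
    push_cast
    ring
  · intro A hA
    simp only [Finset.mem_filter, Finset.mem_univ, true_and] at hA
    rw [Finset.mem_Icc]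
    constructor
    · exact Finset.card_le_card (Finset.subset_inter hA.2 hS)
    · rw [← hA.1]; exact Finset.card_le_card Finset.inter_subset_left

/-! ### Binomial identities -/

lemma vander (n m k : ℕ) (hkn : k ≤ n) (hnk : n - k < m) :
    ∑ a ∈ Finset.Icc 1 m, k.choose a * (n - k).choose (m - a) = n.choose m := by
  have h0 : Finset.Icc 1 m = Finset.range (m + 1) \ {0} := by
    ext x
    simp only [Finset.mem_Icc, Finset.mem_sdiff, Finset.mem_range, Finset.mem_singleton]
    omega
  have hv : ∑ a ∈ Finset.range (m + 1), k.choose a * (n - k).choose (m - a) = n.choose m := by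
    have := Nat.add_choose_eq k (n - k) m
    rw [Nat.add_sub_cancel' hkn] at this
    rw [this, Finset.Nat.sum_antidiagonal_eq_sum_range_succ_mk]
  have hmem : (0 : ℕ) ∈ Finset.range (m + 1) := by simp
  have := Finset.sum_eq_sum_sdiff_singleton_add hmem
    (fun a => k.choose a * (n - k).choose (m - a))
  rw [this, ← h0] at hv
  simpa [Nat.choose_eq_zero_of_lt hnk] using hv

lemma ident1 (n m k : ℕ) (hkn : k ≤ n) (hk : 1 ≤ k) (hnk : n - k < m) :
    ∑ a ∈ Finset.Icc 1 m, ((k - 1).choose (a - 1) * (n - k).choose (m - a) : ℝ) * (1 / a)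
      = (n.choose m : ℝ) / k := by
  have hk0 : (k : ℝ) ≠ 0 := by positivity
  rw [eq_div_iff hk0, Finset.sum_mul]
  rw [← vander n m k hkn hnk]
  push_cast
  apply Finset.sum_congr rfl
  intro a ha
  have ha1 : 1 ≤ a := (Finset.mem_Icc.mp ha).1
  have ha0 : (a : ℝ) ≠ 0 := by positivity
  have key : k * (k - 1).choose (a - 1) = k.choose a * a := by
    have := Nat.add_one_mul_choose_eq (k - 1) (a - 1)
    have e1 : k - 1 + 1 = k := by omega
    have e2 : a - 1 + 1 = a := by omega
    rwa [e1, e2] at this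
  have keyR : (k : ℝ) * ((k - 1).choose (a - 1) : ℝ) = (k.choose a : ℝ) * a := by
    exact_mod_cast congrArg (fun x : ℕ => (x : ℝ)) key
  field_simp
  linear_combination ((n - k).choose (m - a) : ℝ) * keyR

lemma ident2 (n m k : ℕ) (hk : 2 ≤ k) :
    ∑ a ∈ Finset.Icc 1 m, ((k - 1).choose (a - 1) * (n - k).choose (m - a) : ℝ)
        * (((a : ℝ) - 1) / (a : ℝ) ^ 2)
      = ((k : ℝ) - 1) * ∑ a ∈ Finset.Icc 2 m,
          ((k - 2).choose (a - 2) * (n - k).choose (m - a) : ℝ) * (1 / (a : ℝ) ^ 2) := by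
  rw [Finset.mul_sum]
  rw [← Finset.sum_subset
    (Finset.Icc_subset_Icc_left (by norm_num) : Finset.Icc 2 m ⊆ Finset.Icc 1 m)
    (fun a ha hna => ?_)]
  · apply Finset.sum_congr rfl
    intro a ha
    have ha2 : 2 ≤ a := (Finset.mem_Icc.mp ha).1
    have key : (k - 1) * (k - 2).choose (a - 2) = (k - 1).choose (a - 1) * (a - 1) := by
      have := Nat.add_one_mul_choose_eq (k - 2) (a - 2)
      have e1 : k - 2 + 1 = k - 1 := by omega
      have e2 : a - 2 + 1 = a - 1 := by omega
      rwa [e1, e2] at this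
    have keyR : ((k : ℝ) - 1) * ((k - 2).choose (a - 2) : ℝ)
        = ((k - 1).choose (a - 1) : ℝ) * ((a : ℝ) - 1) := by
      have := congrArg (fun x : ℕ => (x : ℝ)) key
      push_cast [Nat.cast_sub (by omega : 1 ≤ k), Nat.cast_sub (by omega : 1 ≤ a)] at this
      convert this using 2
    have ha0 : (a : ℝ) ≠ 0 := by positivity
    field_simp
    linear_combination (-((n - k).choose (m - a) : ℝ)) * keyR
  · have ha1 : a = 1 := by
      simp only [Finset.mem_Icc] at ha hna
      omega
    simp [ha1]

def Texpr (n m k : ℕ) : ℝ :=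
  ∑ r ∈ Finset.Icc (m - k) (min (n - k) (m - 2)),
    ((n - k).choose r : ℝ) * ((k - 2).choose (m - r - 2) : ℝ) / ((m - r : ℕ) : ℝ) ^ 2

lemma ident3 (n m k : ℕ) (hm : 2 ≤ m) (hk : 2 ≤ k) (hmn : m ≤ n) :
    ∑ a ∈ Finset.Icc 2 m, ((k - 2).choose (a - 2) * (n - k).choose (m - a) : ℝ)
        * (1 / (a : ℝ) ^ 2) = Texpr n m k := by
  have step1 : Texpr n m k = ∑ r ∈ Finset.Icc 0 (m - 2),
      ((n - k).choose r : ℝ) * ((k - 2).choose (m - r - 2) : ℝ) / ((m - r : ℕ) : ℝ) ^ 2 := by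
    rw [Texpr]
    apply Finset.sum_subset
    · apply Finset.Icc_subset_Icc (by omega) (by omega)
    · intro r hr hnr
      simp only [Finset.mem_Icc] at hr hnr
      rcases (by omega : (n - k) < r ∨ r < m - k) with h | h
      · rw [Nat.choose_eq_zero_of_lt h]; simp
      · rw [Nat.choose_eq_zero_of_lt (by omega : k - 2 < m - r - 2)]; simp
  rw [step1]
  apply Finset.sum_nbij' (i := fun a => m - a) (j := fun r => m - r)
  · intro a ha
    simp only [Finset.mem_Icc] at ha ⊢
    omega
  · intro r hr
    simp only [Finset.mem_Icc] at hr ⊢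
    omega
  · intro a ha
    simp only [Finset.mem_Icc] at ha
    omega
  · intro r hr
    simp only [Finset.mem_Icc] at hr
    omega
  · intro a ha
    simp only [Finset.mem_Icc] at ha
    rw [Nat.sub_sub_self (by omega : a ≤ m)]
    ring

lemma Tpos (n m k : ℕ) (hm : 2 ≤ m) (hk : 2 ≤ k) (hmn : m ≤ n) : 0 < Texpr n m k := by
  rw [Texpr]
  apply Finset.sum_pos' (fun r hr => by positivity)
  refine ⟨m - k, Finset.mem_Icc.mpr ⟨le_refl _, by omega⟩, ?_⟩
  have h1 : 0 < (n - k).choose (m - k) := Nat.choose_pos (by omega)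
  have h2 : 0 < (k - 2).choose (m - (m - k) - 2) := Nat.choose_pos (by omega)
  have h3 : 0 < m - (m - k) := by omega
  have h3R : (0:ℝ) < ((m - (m - k) : ℕ) : ℝ) := by exact_mod_cast h3
  positivity

/-! ### The equilibrium vector -/

def vvec (n k : ℕ) : Fin n → ℝ := fun i => if (i : ℕ) < k then 1 / (k : ℝ) else 0

lemma mem_Kset {n k : ℕ} (i : Fin n) : i ∈ Kset n k ↔ (i : ℕ) < k := by simp [Kset]

lemma vvec_mem {n k : ℕ} (i : Fin n) (h : i ∈ Kset n k) : vvec n k i = 1 / (k : ℝ) := by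
  rw [vvec, if_pos ((mem_Kset i).mp h)]

lemma vvec_not_mem {n k : ℕ} (i : Fin n) (h : i ∉ Kset n k) : vvec n k i = 0 := by
  rw [vvec, if_neg (fun hc => h ((mem_Kset i).mpr hc))]

lemma sumpow (n k : ℕ) (α : ℝ) (hα : 1 < α) (A : Finset (Fin n)) :
    ∑ j ∈ A, vvec n k j ^ α = ((A ∩ Kset n k).card : ℝ) * (1 / (k : ℝ)) ^ α := by
  rw [← Finset.sum_inter_add_sum_sdiff A (Kset n k) (fun j => vvec n k j ^ α)]
  have h1 : ∑ j ∈ A ∩ Kset n k, vvec n k j ^ α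
      = ((A ∩ Kset n k).card : ℝ) * (1/(k:ℝ)) ^ α := by
    rw [Finset.sum_congr rfl (fun j hj => by
      rw [vvec_mem j (Finset.mem_inter.mp hj).2]), Finset.sum_const, nsmul_eq_mul]
  have h2 : ∑ j ∈ A \ Kset n k, vvec n k j ^ α = 0 := by
    apply Finset.sum_eq_zero
    intro j hj
    rw [vvec_not_mem j (Finset.mem_sdiff.mp hj).2, Real.zero_rpow (by linarith)]
  rw [h1, h2, add_zero]

lemma warm_pipeline (n m k : ℕ) (S : Finset (Fin n)) (P : Finset (Fin n) → Prop)
    [DecidablePred P] (hP : ∀ A, P A ↔ S ⊆ A) (G : Finset (Fin n) → ℝ) (f : ℕ → ℝ)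
    (hG : ∀ A, P A → A.card = m →
      (1 / (n.choose m : ℝ)) * G A = f ((A ∩ Kset n k).card)) :
    ∑ A ∈ Finset.univ.filter P, unifP n m A * G A
      = ∑ A ∈ Finset.univ.filter (fun A : Finset (Fin n) => A.card = m ∧ S ⊆ A),
          f ((A ∩ Kset n k).card) := by
  simp only [unifP, ite_mul, zero_mul]
  rw [← Finset.sum_filter]
  rw [show (Finset.univ.filter P).filter (fun A => A.card = m)
      = Finset.univ.filter (fun A : Finset (Fin n) => A.card = m ∧ S ⊆ A) from by
    rw [Finset.filter_filter]
    apply Finset.filter_congr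
    intro A _
    rw [hP A]
    tauto]
  apply Finset.sum_congr rfl
  intro A hA
  simp only [Finset.mem_filter, Finset.mem_univ, true_and] at hA
  exact hG A ((hP A).mpr hA.2) hA.1


lemma equilibrium (n m k : ℕ) (hkn : k ≤ n) (hk1 : 1 ≤ k) (hnk : n - k < m) (hmn : m ≤ n)
    (α : ℝ) (hα : 1 < α) (i : Fin n) : warmF α (unifP n m) (vvec n k) i = 0 := by
  have hkR : (0:ℝ) < k := by exact_mod_cast hk1
  have hN : (0:ℝ) < (n.choose m : ℝ) := by exact_mod_cast Nat.choose_pos hmn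
  have hcα : (0:ℝ) < (1/(k:ℝ)) ^ α := Real.rpow_pos_of_pos (by positivity) α
  by_cases hi : i ∈ Kset n k
  · rw [warmF, vvec_mem i hi]
    simp only [mul_div_assoc]
    rw [warm_pipeline n m k {i} (fun A => i ∈ A)
      (fun A => by simp [Finset.singleton_subset_iff])
      (fun A => (1/(k:ℝ)) ^ α / (∑ j ∈ A, vvec n k j ^ α))
      (fun a => (1 / (n.choose m : ℝ)) * (1 / (a : ℝ)))
      (fun A hPA hcard => by
        rw [sumpow n k α hα A]
        have hane : ((A ∩ Kset n k).card : ℝ) ≠ 0 := by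
          have : 0 < (A ∩ Kset n k).card :=
            Finset.card_pos.mpr ⟨i, Finset.mem_inter.mpr ⟨hPA, hi⟩⟩
          positivity
        field_simp)]
    rw [master_sum n m k hkn {i} (Finset.singleton_subset_iff.mpr hi)
      (fun a => (1 / (n.choose m : ℝ)) * (1 / (a : ℝ))), Finset.card_singleton]
    have hfac : ∑ a ∈ Finset.Icc 1 m,
        ((k - 1).choose (a - 1) * (n - k).choose (m - a) : ℝ)
          * ((1 / (n.choose m : ℝ)) * (1 / (a : ℝ)))
        = (1 / (n.choose m : ℝ)) * ∑ a ∈ Finset.Icc 1 m,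
            ((k - 1).choose (a - 1) * (n - k).choose (m - a) : ℝ) * (1 / (a : ℝ)) := by
      rw [Finset.mul_sum]
      apply Finset.sum_congr rfl
      intro a _
      ring
    rw [hfac, ident1 n m k hkn hk1 hnk]
    field_simp
    ring
  · rw [warmF, vvec_not_mem i hi, Real.zero_rpow (by linarith : α ≠ 0)]
    simp


lemma rpow_shift (k : ℕ) (hk : 0 < k) (α : ℝ) :
    (1/(k:ℝ)) ^ (α - 1) = (1/(k:ℝ)) ^ α * k := by
  have hkR : (0:ℝ) < k := by exact_mod_cast hk
  rw [Real.rpow_sub (by positivity), Real.rpow_one]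
  field_simp

lemma jacobian (n m k : ℕ) (hkn : k ≤ n) (hk2 : 2 ≤ k) (hm2 : 2 ≤ m)
    (hnk : n - k < m) (hmn : m ≤ n) (α : ℝ) (hα : 1 < α) :
    warmD α (unifP n m) (vvec n k)
      = Dm (Kset n k) (α * (k:ℝ)^2 * Texpr n m k / (n.choose m : ℝ)) := by
  have hkR : (0:ℝ) < k := by exact_mod_cast (by omega : 0 < k)
  have hN : (0:ℝ) < (n.choose m : ℝ) := by exact_mod_cast Nat.choose_pos hmn
  have hcα : (0:ℝ) < (1/(k:ℝ)) ^ α := Real.rpow_pos_of_pos (by positivity) α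
  set β : ℝ := α * (k:ℝ)^2 * Texpr n m k / (n.choose m : ℝ) with hβ
  set cα : ℝ := (1/(k:ℝ)) ^ α with hcαd
  ext i j
  rw [warmD, Dm]
  simp only [Matrix.of_apply]
  by_cases hi : i ∈ Kset n k
  · by_cases hij : i = j
    · subst hij
      rw [if_pos rfl, if_pos ⟨hi, hi⟩, if_pos rfl, Kset_card n k hkn]
      rw [vvec_mem i hi]
      simp only [mul_div_assoc]
      rw [warm_pipeline n m k {i} (fun A => i ∈ A)
        (fun A => by simp [Finset.singleton_subset_iff])
        (fun A => ((∑ j ∈ A, vvec n k j ^ α) - (1/(k:ℝ)) ^ α)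
          / (∑ j ∈ A, vvec n k j ^ α) ^ 2)
        (fun a => (1 / (n.choose m : ℝ)) * ((((a:ℝ) - 1) / (a : ℝ)^2) / cα))
        (fun A hPA hcard => by
          rw [sumpow n k α hα A]
          have hapos : 0 < (A ∩ Kset n k).card :=
            Finset.card_pos.mpr ⟨i, Finset.mem_inter.mpr ⟨hPA, hi⟩⟩
          have hane : ((A ∩ Kset n k).card : ℝ) ≠ 0 := by positivity
          rw [hcαd]
          field_simp)]
      rw [master_sum n m k hkn {i} (Finset.singleton_subset_iff.mpr hi)
        (fun a => (1 / (n.choose m : ℝ)) * ((((a:ℝ) - 1) / (a : ℝ)^2) / cα)),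
        Finset.card_singleton]
      have hfac : ∑ a ∈ Finset.Icc 1 m,
          ((k - 1).choose (a - 1) * (n - k).choose (m - a) : ℝ)
            * ((1 / (n.choose m : ℝ)) * ((((a:ℝ) - 1) / (a : ℝ)^2) / cα))
          = (1 / ((n.choose m : ℝ) * cα)) * ∑ a ∈ Finset.Icc 1 m,
              ((k - 1).choose (a - 1) * (n - k).choose (m - a) : ℝ)
                * (((a:ℝ) - 1) / (a : ℝ)^2) := by
        rw [Finset.mul_sum]
        apply Finset.sum_congr rfl
        intro a _
        ring
      rw [hfac, ident2 n m k hk2, ident3 n m k hm2 hk2 hmn, rpow_shift k (by omega) α, ← hcαd,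
        hβ]
      have hcne : cα ≠ 0 := ne_of_gt hcα
      field_simp
      ring
    · rw [if_neg hij]
      by_cases hj : j ∈ Kset n k
      · rw [if_pos ⟨hi, hj⟩, if_neg hij, Kset_card n k hkn]
        rw [vvec_mem i hi, vvec_mem j hj]
        rw [show ∑ A ∈ Finset.univ.filter (fun A : Finset (Fin n) => i ∈ A ∧ j ∈ A),
            unifP n m A / (∑ l ∈ A, vvec n k l ^ α) ^ 2
            = ∑ A ∈ Finset.univ.filter (fun A : Finset (Fin n) => i ∈ A ∧ j ∈ A),
              unifP n m A * (((∑ l ∈ A, vvec n k l ^ α) ^ 2)⁻¹) from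
          Finset.sum_congr rfl (fun A _ => div_eq_mul_inv _ _)]
        rw [warm_pipeline n m k {i, j} (fun A => i ∈ A ∧ j ∈ A)
          (fun A => by simp [Finset.insert_subset_iff, Finset.singleton_subset_iff])
          (fun A => (((∑ l ∈ A, vvec n k l ^ α) ^ 2)⁻¹))
          (fun a => (1 / (n.choose m : ℝ)) * ((((a:ℝ)^2)⁻¹) * (cα^2)⁻¹))
          (fun A hPA hcard => by
            rw [sumpow n k α hα A, ← hcαd, mul_pow, mul_inv])]
        have hij2 : ({i, j} : Finset (Fin n)).card = 2 := by
          rw [Finset.card_insert_of_notMem (Finset.notMem_singleton.mpr hij),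
            Finset.card_singleton]
        rw [master_sum n m k hkn {i, j}
          (by
            rw [Finset.insert_subset_iff, Finset.singleton_subset_iff]
            exact ⟨hi, hj⟩)
          (fun a => (1 / (n.choose m : ℝ)) * ((((a:ℝ)^2)⁻¹) * (cα^2)⁻¹)), hij2]
        have hfac : ∑ a ∈ Finset.Icc 2 m,
            ((k - 2).choose (a - 2) * (n - k).choose (m - a) : ℝ)
              * ((1 / (n.choose m : ℝ)) * ((((a:ℝ)^2)⁻¹) * (cα^2)⁻¹))
            = (1 / ((n.choose m : ℝ) * cα^2)) * ∑ a ∈ Finset.Icc 2 m,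
                ((k - 2).choose (a - 2) * (n - k).choose (m - a) : ℝ)
                  * (1 / (a : ℝ)^2) := by
          rw [Finset.mul_sum]
          apply Finset.sum_congr rfl
          intro a _
          ring
        rw [hfac, ident3 n m k hm2 hk2 hmn, rpow_shift k (by omega) α, ← hcαd, hβ]
        have hcne : cα ≠ 0 := ne_of_gt hcα
        field_simp
        ring
      · rw [if_neg (fun h => hj h.2), if_neg hij]
        rw [vvec_not_mem j hj, Real.zero_rpow (by linarith : α - 1 ≠ 0)]
        simp
  · by_cases hij : i = j
    · subst hij
      rw [if_pos rfl, if_neg (fun h => hi h.1), if_pos rfl]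
      rw [vvec_not_mem i hi, Real.zero_rpow (by linarith : α - 1 ≠ 0)]
      simp
    · rw [if_neg hij, if_neg (fun h => hi h.1), if_neg hij]
      rw [vvec_not_mem i hi, Real.zero_rpow (by linarith : α ≠ 0)]
      simp

/-- **Stability in the fixed-`m` uniform WARM.** For `n−m+1 ≤ k ≤ n−1`, the vector
`(1/k,…,1/k,0,…,0)` (value `1/k` on the first `k` coordinates) is an equilibrium for
every `α > 1`, and it is linearly stable iff
`α < C(n,m)/(k² Σ_{r=max(m−k,0)}^{min(n−k,m−2)} C(n−k,r) C(k−2,m−r−2)/(m−r)²)`,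
critical if equality holds. -/
theorem fixedm_partial_equilibrium_stability (n m k : ℕ)
    (hn : 3 ≤ n) (hm : 2 ≤ m) (hmn : m ≤ n - 1)
    (hk1 : n - m + 1 ≤ k) (hk2 : k ≤ n - 1)
    (α : ℝ) (hα : 1 < α) :
    (∀ i, warmF α (unifP n m)
        (fun i : Fin n => if (i : ℕ) < k then 1 / (k : ℝ) else 0) i = 0) ∧
    (LinStable (warmD α (unifP n m)
        (fun i : Fin n => if (i : ℕ) < k then 1 / (k : ℝ) else 0)) ↔
      α < (n.choose m : ℝ) /
        ((k : ℝ) ^ 2 * ∑ r ∈ Finset.Icc (m - k) (min (n - k) (m - 2)),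
          ((n - k).choose r : ℝ) * ((k - 2).choose (m - r - 2) : ℝ) /
            ((m - r : ℕ) : ℝ) ^ 2)) ∧
    (α = (n.choose m : ℝ) /
        ((k : ℝ) ^ 2 * ∑ r ∈ Finset.Icc (m - k) (min (n - k) (m - 2)),
          ((n - k).choose r : ℝ) * ((k - 2).choose (m - r - 2) : ℝ) /
            ((m - r : ℕ) : ℝ) ^ 2) →
      CriticalPt (warmD α (unifP n m)
        (fun i : Fin n => if (i : ℕ) < k then 1 / (k : ℝ) else 0))) := by
  have hmn' : m ≤ n := by omega
  have hk2' : 2 ≤ k := by omega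
  have hkn : k ≤ n := by omega
  have hnk : n - k < m := by omega
  have hkR : (0:ℝ) < k := by exact_mod_cast (by omega : 0 < k)
  have hN : (0:ℝ) < (n.choose m : ℝ) := by exact_mod_cast Nat.choose_pos hmn'
  have hT : 0 < Texpr n m k := Tpos n m k hm hk2' hmn'
  have hKcard : (Kset n k).card = k := Kset_card n k hkn
  have hK2 : 2 ≤ (Kset n k).card := by omega
  have hKne : (Kset n k).Nonempty := Finset.card_pos.mp (by omega)
  set β : ℝ := α * (k:ℝ)^2 * Texpr n m k / (n.choose m : ℝ) with hβdef
  have hM : warmD α (unifP n m) (fun i : Fin n => if (i : ℕ) < k then 1 / (k : ℝ) else 0)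
      = Dm (Kset n k) β := jacobian n m k hkn hk2' hm hnk hmn' α hα
  have hTsum : (∑ r ∈ Finset.Icc (m - k) (min (n - k) (m - 2)),
      ((n - k).choose r : ℝ) * ((k - 2).choose (m - r - 2) : ℝ) /
        ((m - r : ℕ) : ℝ) ^ 2) = Texpr n m k := rfl
  have hpos : (0:ℝ) < (k:ℝ)^2 * Texpr n m k := by positivity
  have h1 : β < 1 ↔ α * ((k:ℝ)^2 * Texpr n m k) < (n.choose m : ℝ) := by
    rw [hβdef, div_lt_one hN, mul_assoc]
  have h2 : α < (n.choose m : ℝ) / ((k:ℝ)^2 * Texpr n m k)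
      ↔ α * ((k:ℝ)^2 * Texpr n m k) < (n.choose m : ℝ) := lt_div_iff₀ hpos
  have hre : ∀ γ : ℝ, ((γ:ℂ) - 1).re = γ - 1 := fun γ => by simp
  refine ⟨?_, ?_, ?_⟩
  · intro i
    exact equilibrium n m k hkn (by omega) hnk hmn' α hα i
  · rw [hM, hTsum]
    constructor
    · intro hst
      have h := hst ((β:ℂ) - 1) (eig_at (Kset n k) hK2 β)
      rw [hre] at h
      rw [h2, ← h1]
      linarith
    · intro hα'
      have hβ1 : β < 1 := by rw [h1, ← h2]; exact hα'
      intro μ hμ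
      by_cases hμ1 : μ = -1
      · subst hμ1; simp
      · by_cases hμ2 : μ = (β:ℂ) - 1
        · subst hμ2; rw [hre]; linarith
        · exact absurd hμ (not_eig_of_ne (Kset n k) hKne β μ hμ1 hμ2)
  · intro hEq
    rw [hTsum] at hEq
    have hβ1 : β = 1 := by
      rw [hβdef, hEq]
      field_simp
    rw [hM]
    constructor
    · intro hst
      have h := hst ((β:ℂ) - 1) (eig_at (Kset n k) hK2 β)
      rw [hre, hβ1] at h
      linarith
    · rintro ⟨μ, hμ, hrepos⟩
      have hμ1 : μ ≠ -1 := by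
        intro h; subst h; simp at hrepos; linarith
      have hμ2 : μ ≠ (β:ℂ) - 1 := by
        intro h; subst h; rw [hre, hβ1] at hrepos; linarith
      exact absurd hμ (not_eig_of_ne (Kset n k) hKne β μ hμ1 hμ2)

end
end
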